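/- Let R₂ be the weighted graph on 6 vertices in which every vertex has weight 1/6, three pairwise disjoint edges have weight 1/2, and all remaining edges have weight 1. Then R₂ is 𝒦₁₀-free, and d_{K_5}(R₂) > d_{K_5}(R₁) for every weighted graph R₁ on 5 vertices whose edge weights are all 1 except for exactly one edge of weight 1/2. Equivalently, for all real numbers p,q ≥ 0 with 2p + 3q = 1, one has p²q³/2 < 6·(1/6)⁵·(1/4). -/

import Mathlib

open Filter

structure WeightedGraph (V : Type) [Fintype V] where
  vw : V → ℝ
  ew : V → V → ℝ
  vw_nonneg : ∀ v, 0 ≤ vw v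
  vw_le_one : ∀ v, vw v ≤ 1
  vw_sum : ∑ v, vw v = 1
  ew_nonneg : ∀ u v, 0 ≤ ew u v
  ew_le_one : ∀ u v, ew u v ≤ 1
  ew_symm : ∀ u v, ew u v = ew v u
  ew_self : ∀ v, ew v v = 0

namespace WeightedGraph

variable {V : Type} [Fintype V]

/-- The `K_m`-density of a weighted graph. -/
noncomputable def density (R : WeightedGraph V) (m : ℕ) : ℝ :=
  ∑ σ : Fin m → V, (∏ i, R.vw (σ i)) *
    ∏ p ∈ Finset.univ.filter (fun p : Fin m × Fin m => p.1 < p.2), R.ew (σ p.1) (σ p.2)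

/-- The simple graph `R_{>α}` of edges of weight greater than `α`. -/
def gtGraph (R : WeightedGraph V) (α : ℝ) : SimpleGraph V where
  Adj u v := u ≠ v ∧ α < R.ew u v
  symm := by
    constructor
    intro u v h
    refine ⟨h.1.symm, ?_⟩
    rw [R.ew_symm v u]
    exact h.2
  loopless := by constructor; intro v h; exact h.1 rfl

/-- `R` is `𝒦_t`-free. -/
def KtFree (R : WeightedGraph V) (t : ℕ) : Prop :=
  ¬ ∃ S₁ S₂ : Finset V, S₂ ⊆ S₁ ∧ 1 ≤ S₂.card ∧ S₁.card + S₂.card = t ∧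
      (R.gtGraph 0).IsClique (S₁ : Set V) ∧ (R.gtGraph (1/2)).IsClique (S₂ : Set V)

/-- The conditions (A1)–(A5) on a partition function `part`, for a `(b,a)`-partition
with the number of parts `a` implicit in the type of `part`. -/
def IsBAPartition (R : WeightedGraph V) (s : ℕ) {a : ℕ} (part : V → Fin a) : Prop :=
  Function.Surjective part ∧
  (∀ u v : V, u ≠ v → R.ew u v = 1/2 ∨ R.ew u v = 1) ∧
  (∀ u v : V, u ≠ v → (R.ew u v = 1/2 ↔ part u = part v)) ∧
  (∀ u v : V, part u = part v → R.vw u = R.vw v) ∧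
  (∀ i j : Fin a, (Finset.univ.filter fun x => part x = i).card ≤
      (Finset.univ.filter fun x => part x = j).card + 1) ∧
  (∀ u v : V, (Finset.univ.filter fun x => part x = part v).card ≤
      (Finset.univ.filter fun x => part x = part u).card → R.vw u ≤ R.vw v) ∧
  ((a = 1 ∧ ∀ i : Fin a, (Finset.univ.filter fun x => part x = i).card = s) ∨
   (2 ≤ a ∧ ∀ i : Fin a, (Finset.univ.filter fun x => part x = i).card ≤ s - 1))

/-- `R` admits a `(b,a)`-partition (with clique parameter `s`). -/
def AdmitsPartition (R : WeightedGraph V) (s b a : ℕ) : Prop :=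
  Fintype.card V = b ∧ 1 ≤ a ∧ ∃ part : V → Fin a, R.IsBAPartition s part

end WeightedGraph

/-- `π_s(𝒦_t)`: the supremum of the `K_s`-density over all `𝒦_t`-free weighted graphs. -/
noncomputable def piSup (s t : ℕ) : ℝ :=
  sSup {x : ℝ | ∃ (V : Type) (_ : Fintype V) (R : WeightedGraph V),
    R.KtFree t ∧ R.density s = x}

/-- The independence number of a simple graph. -/
noncomputable def indepNum {α : Type*} (G : SimpleGraph α) : ℕ :=
  sSup {k : ℕ | ∃ S : Finset α, (Gᶜ).IsNClique k S}

/-- The number `N(K_s, G)` of `s`-cliques of `G`. -/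
noncomputable def cliqueCount {α : Type*} (G : SimpleGraph α) (s : ℕ) : ℕ :=
  Set.ncard {S : Finset α | G.IsNClique s S}

/-- The Ramsey–Turán number `RT(n, K_s, K_t, ℓ)`. -/
noncomputable def RT (n s t : ℕ) (ℓ : ℝ) : ℕ :=
  sSup {N : ℕ | ∃ G : SimpleGraph (Fin n),
    G.CliqueFree t ∧ ((indepNum G : ℝ) < ℓ) ∧ N = cliqueCount G s}
/-- The weighted graph on 6 vertices with all vertex weights `1/6`, in which the three disjoint
edges `{0,1}, {2,3}, {4,5}` have weight `1/2` and all other edges have weight `1`. -/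
noncomputable def R19 : WeightedGraph (Fin 6) where
  vw := fun _ => 1 / 6
  ew u v := if u = v then 0 else if (u : ℕ) / 2 = (v : ℕ) / 2 then 1/2 else 1
  vw_nonneg v := by norm_num
  vw_le_one v := by norm_num
  vw_sum := by
    simp [Finset.sum_const, Finset.card_univ]
  ew_nonneg u v := by
    try dsimp only
    split
    · norm_num
    · split <;> norm_num
  ew_le_one u v := by
    try dsimp only
    split
    · norm_num
    · split <;> norm_num
  ew_symm u v := by
    try dsimp only
    rcases eq_or_ne u v with h | h
    · simp [h]
    · rw [if_neg h, if_neg (Ne.symm h)]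
      by_cases h2 : (u : ℕ) / 2 = (v : ℕ) / 2
      · rw [if_pos h2, if_pos h2.symm]
      · rw [if_neg h2, if_neg (fun e => h2 e.symm)]
  ew_self v := by simp

/-- All edge weights of `R` equal `1` except for exactly one edge of weight `1/2`. -/
def OneHalfEdge {V : Type} [Fintype V] (R : WeightedGraph V) : Prop :=
  ∃ u v : V, u ≠ v ∧ R.ew u v = 1/2 ∧
    ∀ x y : V, x ≠ y → ¬(x = u ∧ y = v) → ¬(x = v ∧ y = u) → R.ew x y = 1

section AuxLemmas

open Finset

lemma myAMGM {W : Type} [Fintype W] (f : W → ℝ) (n : ℕ) (hn : Fintype.card W = n)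
    (hn0 : 0 < n) (hf : ∀ w, 0 ≤ f w) (hs : ∑ w, f w = 1) :
    ∏ w, f w ≤ (1 / n : ℝ) ^ n := by
  have hn' : (0:ℝ) < n := by exact_mod_cast hn0
  have key := Real.geom_mean_le_arith_mean_weighted Finset.univ (fun _ => 1/(n:ℝ)) f
    (fun i _ => by positivity) (by simp [Finset.card_univ, hn]; field_simp) (fun i _ => hf i)
  rw [Real.finset_prod_rpow _ _ (fun i _ => hf i)] at key
  rw [← Finset.mul_sum, hs, mul_one] at key
  have hP : 0 ≤ ∏ w, f w := Finset.prod_nonneg (fun i _ => hf i)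
  calc ∏ w, f w = ((∏ w, f w) ^ ((1:ℝ)/n)) ^ n := by
        rw [← Real.rpow_natCast (((∏ w, f w) ^ ((1:ℝ)/n))) n, ← Real.rpow_mul hP]
        rw [one_div, inv_mul_cancel₀ (ne_of_gt hn'), Real.rpow_one]
    _ ≤ (1/(n:ℝ))^n := pow_le_pow_left₀ (Real.rpow_nonneg hP _) key n

lemma myCardInj (α β : Type) [Fintype α] [Fintype β] [DecidableEq α] [DecidableEq β]
    [DecidablePred fun f : α → β => Function.Injective f] :
    (Finset.univ.filter (fun f : α → β => Function.Injective f)).card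
      = (Fintype.card β).descFactorial (Fintype.card α) := by
  classical
  rw [← Fintype.card_embedding_eq (α := α) (β := β), ← Fintype.card_subtype]
  exact Fintype.card_congr (Equiv.subtypeInjectiveEquivEmbedding α β)

lemma myBlock : ∀ a b c d : Fin 6, a ≠ b → c ≠ d → (a:ℕ)/2=(b:ℕ)/2 → (c:ℕ)/2=(d:ℕ)/2 →
    (a:ℕ)/2 = (c:ℕ)/2 → (a = c ∧ b = d) ∨ (a = d ∧ b = c) := by decide

lemma myProdLeSingle {ι : Type*} {s : Finset ι} {f : ι → ℝ} [DecidableEq ι]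
    (h0 : ∀ i ∈ s, 0 ≤ f i) (h1 : ∀ i ∈ s, f i ≤ 1) {p : ι} (hp : p ∈ s) :
    ∏ i ∈ s, f i ≤ f p := by
  rw [← Finset.prod_erase_mul s f hp]
  exact mul_le_of_le_one_left (h0 p hp)
    (Finset.prod_le_one (fun i hi => h0 i (Finset.mem_of_mem_erase hi))
      (fun i hi => h1 i (Finset.mem_of_mem_erase hi)))

lemma myTermNonneg {V : Type} [Fintype V] (R : WeightedGraph V) {m : ℕ} (σ : Fin m → V) :
    0 ≤ (∏ i, R.vw (σ i)) *
      ∏ p ∈ Finset.univ.filter (fun p : Fin m × Fin m => p.1 < p.2), R.ew (σ p.1) (σ p.2) :=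
  mul_nonneg (Finset.prod_nonneg fun i _ => R.vw_nonneg _)
    (Finset.prod_nonneg fun p _ => R.ew_nonneg _ _)

lemma myTermZero {V : Type} [Fintype V] (R : WeightedGraph V) {m : ℕ} {σ : Fin m → V}
    (h : ¬ Function.Injective σ) :
    (∏ i, R.vw (σ i)) *
      ∏ p ∈ Finset.univ.filter (fun p : Fin m × Fin m => p.1 < p.2), R.ew (σ p.1) (σ p.2) = 0 := by
  simp only [Function.Injective, not_forall] at h
  obtain ⟨i, j, hij, hne⟩ := h
  rcases lt_or_gt_of_ne hne with hlt | hlt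
  · rw [Finset.prod_eq_zero (i := (i,j)) (by simp [hlt]) (by simp [hij, R.ew_self]), mul_zero]
  · rw [Finset.prod_eq_zero (i := (j,i)) (by simp [hlt]) (by simp [← hij, R.ew_self]), mul_zero]

open Classical in
lemma myDensityFilter {V : Type} [Fintype V] (R : WeightedGraph V) (m : ℕ) :
    R.density m = ∑ σ ∈ Finset.univ.filter (fun σ : Fin m → V => Function.Injective σ),
      (∏ i, R.vw (σ i)) *
        ∏ p ∈ Finset.univ.filter (fun p : Fin m × Fin m => p.1 < p.2), R.ew (σ p.1) (σ p.2) := by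
  rw [WeightedGraph.density]
  exact (Finset.sum_filter_of_ne (fun σ _ hne => by
    by_contra h; exact hne (myTermZero R h))).symm

end AuxLemmas

theorem counterexample_s_five_t_ten :
    R19.KtFree 10 ∧
    (∀ (W : Type) (_ : Fintype W) (R₁ : WeightedGraph W),
      Fintype.card W = 5 → OneHalfEdge R₁ → R₁.density 5 < R19.density 5) ∧
    (∀ p q : ℝ, 0 ≤ p → 0 ≤ q → 2 * p + 3 * q = 1 →
      p ^ 2 * q ^ 3 / 2 < 6 * (1 / 6 : ℝ) ^ 5 * (1 / 4)) := by
  classical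
  refine ⟨?_, ?_, ?_⟩
  · -- KtFree 10
    rintro ⟨S₁, S₂, hsub, hS2, hcard, hc1, hc2⟩
    have h1 : S₁.card ≤ 6 := le_trans (Finset.card_le_univ S₁) (by simp)
    have h2 : 4 ≤ S₂.card := by omega
    obtain ⟨x, hx, y, hy, hxy, hf⟩ := Finset.exists_ne_map_eq_of_card_lt_of_maps_to
      (s := S₂) (t := (Finset.univ : Finset (Fin 3)))
      (f := fun v : Fin 6 => (⟨(v:ℕ)/2, by have := v.isLt; omega⟩ : Fin 3))
      (by simp only [Finset.card_univ, Fintype.card_fin]; omega)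
      (fun a _ => Finset.mem_univ _)
    have hblk : (x:ℕ)/2 = (y:ℕ)/2 := by
      simpa using congrArg Fin.val hf
    have hadj := hc2 (Finset.mem_coe.mpr hx) (Finset.mem_coe.mpr hy) hxy
    have hgt : (1:ℝ)/2 < R19.ew x y := hadj.2
    have heq : R19.ew x y = 1/2 := by simp [R19, hxy, hblk]
    rw [heq] at hgt
    exact lt_irrefl _ hgt
  · -- density comparison
    intro W _ R₁ hW hOne
    obtain ⟨u, v, huv, huv2, _hrest⟩ := hOne
    have hub : R₁.density 5 ≤ 60 * ((1/5 : ℝ))^5 := by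
      rw [myDensityFilter]
      have hP : ∏ w, R₁.vw w ≤ (1/((5:ℕ):ℝ))^5 :=
        myAMGM R₁.vw 5 hW (by norm_num) R₁.vw_nonneg R₁.vw_sum
      have hP' : ∏ w, R₁.vw w ≤ (1/5 : ℝ)^5 := by push_cast at hP; exact hP
      have hPn : (0:ℝ) ≤ ∏ w, R₁.vw w := Finset.prod_nonneg (fun w _ => R₁.vw_nonneg w)
      have hcard : (Finset.univ.filter (fun σ : Fin 5 → W => Function.Injective σ)).card = 120 := by
        rw [myCardInj, hW]
        norm_num [Nat.descFactorial]
      have hterm : ∀ σ ∈ Finset.univ.filter (fun σ : Fin 5 → W => Function.Injective σ),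
          (∏ i, R₁.vw (σ i)) *
            ∏ p ∈ Finset.univ.filter (fun p : Fin 5 × Fin 5 => p.1 < p.2),
              R₁.ew (σ p.1) (σ p.2) ≤ (∏ w, R₁.vw w) * (1/2) := by
        intro σ hσ
        have hinj : Function.Injective σ := (Finset.mem_filter.mp hσ).2
        have hbij : Function.Bijective σ :=
          (Fintype.bijective_iff_injective_and_card σ).mpr ⟨hinj, by simp [hW]⟩
        have hvp : ∏ i, R₁.vw (σ i) = ∏ w, R₁.vw w :=
          Fintype.prod_bijective σ hbij _ _ (fun x => rfl)
        obtain ⟨i, hi⟩ := hbij.2 u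
        obtain ⟨j, hj⟩ := hbij.2 v
        have hij : i ≠ j := fun e => huv (by rw [← hi, ← hj, e])
        have hedge : ∏ p ∈ Finset.univ.filter (fun p : Fin 5 × Fin 5 => p.1 < p.2),
            R₁.ew (σ p.1) (σ p.2) ≤ 1/2 := by
          rcases lt_or_gt_of_ne hij with hlt | hlt
          · calc ∏ p ∈ Finset.univ.filter (fun p : Fin 5 × Fin 5 => p.1 < p.2),
                  R₁.ew (σ p.1) (σ p.2)
                ≤ R₁.ew (σ (i,j).1) (σ (i,j).2) :=
                  myProdLeSingle (fun p _ => R₁.ew_nonneg _ _)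
                    (fun p _ => R₁.ew_le_one _ _) (by simp [hlt])
              _ = 1/2 := by simp only [hi, hj, huv2]
          · calc ∏ p ∈ Finset.univ.filter (fun p : Fin 5 × Fin 5 => p.1 < p.2),
                  R₁.ew (σ p.1) (σ p.2)
                ≤ R₁.ew (σ (j,i).1) (σ (j,i).2) :=
                  myProdLeSingle (fun p _ => R₁.ew_nonneg _ _)
                    (fun p _ => R₁.ew_le_one _ _) (by simp [hlt])
              _ = 1/2 := by rw [R₁.ew_symm]; simp only [hi, hj, huv2]
        rw [hvp]
        exact mul_le_mul_of_nonneg_left hedge hPn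
      calc (∑ σ ∈ Finset.univ.filter (fun σ : Fin 5 → W => Function.Injective σ),
              (∏ i, R₁.vw (σ i)) *
                ∏ p ∈ Finset.univ.filter (fun p : Fin 5 × Fin 5 => p.1 < p.2),
                  R₁.ew (σ p.1) (σ p.2))
          ≤ (Finset.univ.filter (fun σ : Fin 5 → W => Function.Injective σ)).card •
              ((∏ w, R₁.vw w) * (1/2)) := Finset.sum_le_card_nsmul _ _ _ hterm
        _ = 120 * ((∏ w, R₁.vw w) * (1/2)) := by rw [hcard]; simp
        _ ≤ 60 * (1/5 : ℝ)^5 := by nlinarith [hP']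
    have hlb : 720 * ((1/6:ℝ)^5 * (1/4)) ≤ R19.density 5 := by
      rw [WeightedGraph.density]
      have hcard : (Finset.univ.filter
          (fun σ : Fin 5 → Fin 6 => Function.Injective σ)).card = 720 := by
        rw [myCardInj]
        norm_num [Nat.descFactorial]
      have hge : ∀ σ ∈ Finset.univ.filter (fun σ : Fin 5 → Fin 6 => Function.Injective σ),
          (1/6:ℝ)^5 * (1/4) ≤ (∏ i, R19.vw (σ i)) *
            ∏ p ∈ Finset.univ.filter (fun p : Fin 5 × Fin 5 => p.1 < p.2),
              R19.ew (σ p.1) (σ p.2) := by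
        intro σ hσ
        have hinj : Function.Injective σ := (Finset.mem_filter.mp hσ).2
        have hvp : ∏ i, R19.vw (σ i) = (1/6:ℝ)^5 := by
          simp [R19]
        set Pr := Finset.univ.filter (fun p : Fin 5 × Fin 5 => p.1 < p.2) with hPr
        set T := Pr.filter (fun p : Fin 5 × Fin 5 => ((σ p.1 : ℕ))/2 = ((σ p.2 : ℕ))/2) with hT
        have hTfacts : ∀ p ∈ T, p.1 < p.2 ∧ ((σ p.1 : ℕ))/2 = ((σ p.2 : ℕ))/2 := by
          intro p hp
          obtain ⟨hpPr, hpq⟩ := Finset.mem_filter.mp hp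
          exact ⟨(Finset.mem_filter.mp hpPr).2, hpq⟩
        have hdisj : ∀ p ∈ T, ∀ q ∈ T, p ≠ q →
            Disjoint ({p.1, p.2} : Finset (Fin 5)) {q.1, q.2} := by
          intro p hp q hq hne
          rw [Finset.disjoint_left]
          intro x hxp hxq
          simp only [Finset.mem_insert, Finset.mem_singleton] at hxp hxq
          obtain ⟨hp12, hpb⟩ := hTfacts p hp
          obtain ⟨hq12, hqb⟩ := hTfacts q hq
          have hab : σ p.1 ≠ σ p.2 := fun e => absurd (hinj e) (ne_of_lt hp12)
          have hcd : σ q.1 ≠ σ q.2 := fun e => absurd (hinj e) (ne_of_lt hq12)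
          have hx1 : ((σ x : ℕ))/2 = ((σ p.1 : ℕ))/2 := by
            rcases hxp with rfl | rfl
            · rfl
            · exact hpb.symm
          have hx2 : ((σ x : ℕ))/2 = ((σ q.1 : ℕ))/2 := by
            rcases hxq with rfl | rfl
            · rfl
            · exact hqb.symm
          rcases myBlock (σ p.1) (σ p.2) (σ q.1) (σ q.2) hab hcd hpb hqb
              (hx1.symm.trans hx2) with ⟨e1, e2⟩ | ⟨e1, e2⟩
          · exact hne (Prod.ext (hinj e1) (hinj e2))
          · have g1 : p.1 = q.2 := hinj e1
            have g2 : p.2 = q.1 := hinj e2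
            rw [g1, g2] at hp12
            exact absurd hq12 (not_lt_of_gt hp12)
        have hk : T.card ≤ 2 := by
          have h1 : (T.biUnion fun p => ({p.1, p.2} : Finset (Fin 5))).card
              = ∑ p ∈ T, ({p.1, p.2} : Finset (Fin 5)).card := Finset.card_biUnion hdisj
          have h2 : ∑ p ∈ T, ({p.1, p.2} : Finset (Fin 5)).card = 2 * T.card := by
            rw [Finset.sum_congr rfl (fun p hp => Finset.card_pair (ne_of_lt (hTfacts p hp).1))]
            simp [mul_comm]
          have h3 := Finset.card_le_univ (T.biUnion fun p => ({p.1, p.2} : Finset (Fin 5)))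
          simp only [Finset.card_univ, Fintype.card_fin] at h3
          omega
        have hsplit := Finset.prod_filter_mul_prod_filter_not Pr
          (fun p : Fin 5 × Fin 5 => ((σ p.1 : ℕ))/2 = ((σ p.2 : ℕ))/2)
          (fun p => R19.ew (σ p.1) (σ p.2))
        have hT1 : ∏ p ∈ T, R19.ew (σ p.1) (σ p.2) = (1/2:ℝ)^T.card := by
          rw [Finset.prod_congr rfl (fun p hp => ?_), Finset.prod_const]
          obtain ⟨hp12, hpb⟩ := hTfacts p hp
          have hne : σ p.1 ≠ σ p.2 := fun e => absurd (hinj e) (ne_of_lt hp12)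
          simp [R19, hne, hpb]
        have hT2 : ∏ p ∈ Pr.filter
            (fun p : Fin 5 × Fin 5 => ¬ ((σ p.1 : ℕ))/2 = ((σ p.2 : ℕ))/2),
            R19.ew (σ p.1) (σ p.2) = 1 := by
          apply Finset.prod_eq_one
          intro p hp
          obtain ⟨hpPr, hpq⟩ := Finset.mem_filter.mp hp
          have hne : σ p.1 ≠ σ p.2 := fun e => hpq (by rw [e])
          simp [R19, hne, hpq]
        have hedge : ∏ p ∈ Pr, R19.ew (σ p.1) (σ p.2) = (1/2:ℝ)^T.card := by
          rw [← hsplit, ← hT, hT1, hT2, mul_one]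
        have hedge' : (1/4:ℝ) ≤ ∏ p ∈ Pr, R19.ew (σ p.1) (σ p.2) := by
          rw [hedge]
          calc (1/4:ℝ) = (1/2:ℝ)^2 := by norm_num
            _ ≤ (1/2:ℝ)^T.card :=
              pow_le_pow_of_le_one (by norm_num) (by norm_num) hk
        rw [hvp]
        exact mul_le_mul_of_nonneg_left hedge' (by positivity)
      calc (720:ℝ) * ((1/6)^5 * (1/4))
          = (Finset.univ.filter (fun σ : Fin 5 → Fin 6 => Function.Injective σ)).card •
              ((1/6:ℝ)^5 * (1/4)) := by rw [hcard]; simp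
        _ ≤ ∑ σ ∈ Finset.univ.filter (fun σ : Fin 5 → Fin 6 => Function.Injective σ),
              (∏ i, R19.vw (σ i)) *
                ∏ p ∈ Finset.univ.filter (fun p : Fin 5 × Fin 5 => p.1 < p.2),
                  R19.ew (σ p.1) (σ p.2) := Finset.card_nsmul_le_sum _ _ _ hge
        _ ≤ ∑ σ : Fin 5 → Fin 6,
              (∏ i, R19.vw (σ i)) *
                ∏ p ∈ Finset.univ.filter (fun p : Fin 5 × Fin 5 => p.1 < p.2),
                  R19.ew (σ p.1) (σ p.2) :=
            Finset.sum_le_sum_of_subset_of_nonneg (Finset.filter_subset _ _)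
              (fun σ _ _ => myTermNonneg R19 σ)
    have hnum : (60:ℝ) * (1/5)^5 < 720 * ((1/6)^5 * (1/4)) := by norm_num
    linarith
  · intro p q hp hq h
    nlinarith [sq_nonneg (p - q), sq_nonneg (p + q), sq_nonneg (p*q), mul_nonneg hp hq,
      sq_nonneg (q - 1/5), sq_nonneg (p - 1/5), mul_nonneg (mul_nonneg hp hq) hq,
      mul_nonneg (mul_nonneg hp hp) hq, sq_nonneg (p*q - 1/25)]
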